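/- Among all nonincreasing nonnegative integer sequences $(l_1,\dots,l_\Lambda)$ with $\sum_\lambda l_\lambda = K$, the quantity $T(\mathbf{L}) = \sum_{\lambda=1}^{\Lambda-t} l_\lambda \binom{\Lambda-\lambda}{t}/\binom{\Lambda}{t}$ is minimized by the balanced profile with $l_\lambda = \lfloor K/\Lambda\rfloor + 1$ for $\lambda \le \hat K$ and $l_\lambda = \lfloor K/\Lambda\rfloor$ for $\lambda > \hat K$, where $\hat K = K - \lfloor K/\Lambda\rfloor \Lambda$. -/

import Mathlib

open Finset

private lemma tel10 (f : ℕ → ℤ) : ∀ N lam, lam ≤ N + 1 →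
    ∑ m ∈ Icc lam N, (f m - f (m + 1)) = f lam - f (N + 1) := by
  intro N
  induction N with
  | zero =>
    intro lam h
    interval_cases lam <;> simp
  | succ N ih =>
    intro lam h
    rcases Nat.lt_or_ge lam (N + 2) with h' | h'
    · rw [Finset.sum_Icc_succ_top (by omega : lam ≤ N + 1), ih lam (by omega)]
      ring
    · have hlam : lam = N + 2 := by omega
      subst hlam
      rw [Finset.Icc_eq_empty (by omega)]
      simp

private lemma swap10 (Λ : ℕ) (a W : ℕ → ℤ) :
    ∑ lam ∈ Icc 1 Λ, a lam * W lam
      = (∑ m ∈ Icc 1 Λ, (W m - W (m + 1)) * ∑ i ∈ Icc 1 m, a i)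
        + W (Λ + 1) * ∑ i ∈ Icc 1 Λ, a i := by
  have h1 : ∀ lam ∈ Icc 1 Λ, a lam * W lam
      = (∑ m ∈ Icc lam Λ, a lam * (W m - W (m + 1))) + a lam * W (Λ + 1) := by
    intro lam hlam
    simp only [mem_Icc] at hlam
    rw [← Finset.mul_sum, tel10 W Λ lam (by omega)]
    ring
  rw [Finset.sum_congr rfl h1, Finset.sum_add_distrib]
  congr 1
  · rw [Finset.sum_comm' (t' := Icc 1 Λ) (s' := fun m => Icc 1 m)
      (by intro x y; simp only [mem_Icc]; omega)]
    apply Finset.sum_congr rfl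
    intro m _
    rw [Finset.mul_sum]
    apply Finset.sum_congr rfl
    intro i _
    ring
  · rw [Finset.mul_sum]
    apply Finset.sum_congr rfl
    intro i _
    ring

private lemma main_ineq10 (Λ : ℕ) (a₁ a₂ W : ℕ → ℤ)
    (hW : ∀ m, W (m + 1) ≤ W m)
    (hS : ∀ m, 1 ≤ m → m ≤ Λ → ∑ i ∈ Icc 1 m, a₁ i ≤ ∑ i ∈ Icc 1 m, a₂ i)
    (hK : ∑ i ∈ Icc 1 Λ, a₁ i = ∑ i ∈ Icc 1 Λ, a₂ i) :
    ∑ lam ∈ Icc 1 Λ, a₁ lam * W lam ≤ ∑ lam ∈ Icc 1 Λ, a₂ lam * W lam := by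
  rw [swap10 Λ a₁ W, swap10 Λ a₂ W, hK]
  apply add_le_add ?_ le_rfl
  apply Finset.sum_le_sum
  intro m hm
  simp only [mem_Icc] at hm
  exact mul_le_mul_of_nonneg_left (hS m hm.1 hm.2) (by linarith [hW m])

private lemma sum_bal10 (q r : ℕ) :
    ∀ m, ∑ i ∈ Icc 1 m, (if i ≤ r then q + 1 else q) = m * q + min m r := by
  intro m
  induction m with
  | zero => simp
  | succ m ih =>
    rw [Finset.sum_Icc_succ_top (by omega : 1 ≤ m + 1), ih]
    by_cases h : m + 1 ≤ r
    · rw [if_pos h, Nat.min_eq_left (by omega), Nat.min_eq_left (by omega)]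
      ring
    · rw [if_neg h, Nat.min_eq_right (by omega), Nat.min_eq_right (by omega)]
      ring

private lemma sum_lb10 (Λ K : ℕ) (hΛ : 1 ≤ Λ) (l : ℕ → ℕ)
    (hmono : ∀ i j, 1 ≤ i → i ≤ j → j ≤ Λ → l j ≤ l i)
    (hsum : ∑ lam ∈ Finset.Icc 1 Λ, l lam = K) :
    ∀ m, 1 ≤ m → m ≤ Λ →
      m * (K / Λ) + min m (K % Λ) ≤ ∑ i ∈ Icc 1 m, l i := by
  intro m hm1 hmΛ
  set q := K / Λ with hq
  set r := K % Λ with hr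
  have hrΛ : r < Λ := Nat.mod_lt _ (by omega)
  have hKqr : Λ * q + r = K := Nat.div_add_mod K Λ
  set S := ∑ i ∈ Icc 1 m, l i with hS
  -- l m times m is at most S
  have h1 : m * l m ≤ S := by
    calc m * l m = ∑ _i ∈ Icc 1 m, l m := by
          rw [Finset.sum_const, Nat.card_Icc, smul_eq_mul, Nat.add_sub_cancel]
      _ ≤ S := Finset.sum_le_sum (fun i hi => by
          simp only [mem_Icc] at hi
          exact hmono i m hi.1 hi.2 hmΛ)
  -- K is at most S plus the tail bound
  have h2 : K ≤ S + (Λ - m) * l m := by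
    have hsplit : (∑ i ∈ Ioc 0 m, l i) + ∑ i ∈ Ioc m Λ, l i = ∑ i ∈ Ioc 0 Λ, l i :=
      Finset.sum_Ioc_consecutive l (by omega) hmΛ
    have h01 : Ioc 0 m = Icc 1 m := by ext x; simp [Nat.lt_iff_add_one_le]
    have h02 : Ioc 0 Λ = Icc 1 Λ := by ext x; simp [Nat.lt_iff_add_one_le]
    have htail : ∑ i ∈ Ioc m Λ, l i ≤ (Λ - m) * l m := by
      calc ∑ i ∈ Ioc m Λ, l i ≤ ∑ _i ∈ Ioc m Λ, l m :=
            Finset.sum_le_sum (fun i hi => by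
              simp only [mem_Ioc] at hi
              exact hmono m i hm1 (by omega) hi.2)
        _ = (Λ - m) * l m := by rw [Finset.sum_const, Nat.card_Ioc]; ring
    rw [h01, h02, hsum] at hsplit
    omega
  by_contra hcon
  push_neg at hcon
  -- l m ≤ q
  have hlmq : l m ≤ q := by
    have : m * l m < m * (q + 1) := by
      have hmin : min m r ≤ m := Nat.min_le_left _ _
      calc m * l m ≤ S := h1
        _ < m * q + min m r := hcon
        _ ≤ m * q + m := by omega
        _ = m * (q + 1) := by ring
    have := Nat.lt_of_mul_lt_mul_left this
    omega
  have h3 : (Λ - m) * l m ≤ (Λ - m) * q := Nat.mul_le_mul_left _ hlmq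
  have h4 : Λ * q = m * q + (Λ - m) * q := by
    have h : Λ = m + (Λ - m) := by omega
    nth_rewrite 1 [h]; ring
  have hminr : min m r ≤ r := Nat.min_le_right _ _
  -- K ≤ S + (Λ-m)*q, K = m*q + (Λ-m)*q + r ⇒ m*q + r ≤ S, contradiction
  have h5 : m * q + (Λ - m) * q + r ≤ S + (Λ - m) * q := by
    calc m * q + (Λ - m) * q + r = K := by rw [← h4]; exact hKqr
      _ ≤ S + (Λ - m) * l m := h2
      _ ≤ S + (Λ - m) * q := by omega
  have h6 : m * q + r ≤ S := by omega
  omega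

/-- The balanced profile minimizes the delivery time among all nonincreasing
nonnegative integer profiles summing to `K`. -/
theorem stmt10 (Λ t K : ℕ) (hΛ : 1 ≤ Λ) (ht : t < Λ) (l : ℕ → ℕ)
    (hmono : ∀ i j, 1 ≤ i → i ≤ j → j ≤ Λ → l j ≤ l i)
    (hsum : ∑ lam ∈ Finset.Icc 1 Λ, l lam = K) :
    ∑ lam ∈ Finset.Icc 1 (Λ - t),
        ((if lam ≤ K % Λ then K / Λ + 1 else K / Λ : ℕ) : ℝ) *
          (Nat.choose (Λ - lam) t) / (Nat.choose Λ t)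
      ≤ ∑ lam ∈ Finset.Icc 1 (Λ - t),
          (l lam : ℝ) * (Nat.choose (Λ - lam) t) / (Nat.choose Λ t) := by
  have hrΛ : K % Λ < Λ := Nat.mod_lt _ (by omega)
  have hKqr : Λ * (K / Λ) + K % Λ = K := Nat.div_add_mod K Λ
  -- the key integer inequality over the full range
  have key : ∑ lam ∈ Icc 1 Λ,
        ((if lam ≤ K % Λ then K / Λ + 1 else K / Λ : ℕ) : ℤ) * ((Λ - lam).choose t : ℤ)
      ≤ ∑ lam ∈ Icc 1 Λ, (l lam : ℤ) * ((Λ - lam).choose t : ℤ) := by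
    apply main_ineq10 Λ
      (fun lam => ((if lam ≤ K % Λ then K / Λ + 1 else K / Λ : ℕ) : ℤ))
      (fun lam => (l lam : ℤ)) (fun j => ((Λ - j).choose t : ℤ))
    · intro m
      exact_mod_cast Nat.choose_le_choose t (by omega : Λ - (m + 1) ≤ Λ - m)
    · intro m hm1 hmΛ
      have hb := sum_bal10 (K / Λ) (K % Λ) m
      have hl := sum_lb10 Λ K hΛ l hmono hsum m hm1 hmΛ
      have : ∑ i ∈ Icc 1 m, (if i ≤ K % Λ then K / Λ + 1 else K / Λ) ≤ ∑ i ∈ Icc 1 m, l i := by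
        omega
      exact_mod_cast this
    · have hb := sum_bal10 (K / Λ) (K % Λ) Λ
      have : ∑ i ∈ Icc 1 Λ, (if i ≤ K % Λ then K / Λ + 1 else K / Λ) = ∑ i ∈ Icc 1 Λ, l i := by
        rw [hsum, hb, Nat.min_eq_right (by omega)]
        omega
      exact_mod_cast this
  -- reduce the real goal
  have hC : (0 : ℝ) < (Nat.choose Λ t : ℝ) := by
    exact_mod_cast Nat.choose_pos ht.le
  rw [← Finset.sum_div, ← Finset.sum_div]
  apply div_le_div_of_nonneg_right ?_ hC.le
  have hzero : ∀ f : ℕ → ℕ,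
      ∑ lam ∈ Icc 1 (Λ - t), (f lam : ℝ) * ((Λ - lam).choose t : ℝ)
        = ∑ lam ∈ Icc 1 Λ, (f lam : ℝ) * ((Λ - lam).choose t : ℝ) := by
    intro f
    apply Finset.sum_subset (Finset.Icc_subset_Icc_right (by omega))
    intro x hx hx'
    simp only [mem_Icc] at hx hx'
    have : (Λ - x).choose t = 0 := Nat.choose_eq_zero_of_lt (by omega)
    rw [this]
    simp
  rw [hzero (fun lam => if lam ≤ K % Λ then K / Λ + 1 else K / Λ), hzero l]
  exact_mod_cast key
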